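/- Let (Y_n)_{n≥0} be square-integrable real random variables converging in L² to a square-integrable random variable Y, with Y_{−1} = 0 by convention. Let q ∈ A (q_0 = 1, q decreasing, positive, q_i → 0), and let N be an ℕ-valued random variable independent of (Y_i) with P(N ≥ i) = q_i. Define the coupled sum estimator Z̄ = ∑_{i=0}^{N} (Y_i − Y_{i−1})/q_i. Then Z̄ is square-integrable if and only if ∑_{i≥0} (1/q_{i+1} − 1/q_i) E[(Y_i − Y)²] < ∞. -/

import Mathlib

open MeasureTheory ProbabilityTheory Filter Finset ENNReal

lemma sum_tele_w (q : ℕ → ℝ) (hq0 : q 0 = 1) (m : ℕ) :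
    ∑ i ∈ range m, (1 / q (i + 1) - 1 / q i) = 1 / q m - 1 := by
  induction m with
  | zero => simp [hq0]
  | succ m ih => rw [Finset.sum_range_succ, ih]; ring

lemma abel_s (q y s : ℕ → ℝ)
    (hs : ∀ n, s n = ∑ k ∈ range (n + 1), (y k - if k = 0 then 0 else y (k - 1)) / q k)
    (n : ℕ) :
    s n = y n / q n - ∑ i ∈ range n, (1 / q (i + 1) - 1 / q i) * y i := by
  induction n with
  | zero => simp [hs 0]
  | succ n ih =>
    have : s (n + 1) = s n + (y (n + 1) - y n) / q (n + 1) := by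
      rw [hs (n + 1), hs n,
        Finset.sum_range_succ (fun k => (y k - if k = 0 then 0 else y (k - 1)) / q k)]
      simp
    rw [this, ih, Finset.sum_range_succ]
    ring

lemma key_id (q y s : ℕ → ℝ) (hq0 : q 0 = 1) (hqne : ∀ i, q i ≠ 0)
    (hs : ∀ n, s n = ∑ k ∈ range (n + 1), (y k - if k = 0 then 0 else y (k - 1)) / q k)
    (m : ℕ) :
    ∑ n ∈ range (m + 1), (q n - q (n + 1)) * (s n) ^ 2 + q (m + 1) * (s m) ^ 2
    = (y m) ^ 2 + ∑ i ∈ range m, (1 / q (i + 1) - 1 / q i) * (y i - y m) ^ 2 := by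
  induction m with
  | zero =>
    have h0 : s 0 = y 0 := by simp [hs 0, hq0]
    simp [h0, hq0]
    ring
  | succ m ih =>
    have hsm : s (m + 1) = s m + (y (m + 1) - y m) / q (m + 1) := by
      rw [hs (m + 1), hs m,
        Finset.sum_range_succ (fun k => (y k - if k = 0 then 0 else y (k - 1)) / q k)]
      simp
    have habel := abel_s q y s hs m
    have hw := sum_tele_w q hq0 m
    rw [Finset.sum_range_succ (fun n => (q n - q (n + 1)) * (s n) ^ 2)]
    rw [Finset.sum_range_succ (fun i => (1 / q (i + 1) - 1 / q i) * (y i - y (m + 1)) ^ 2)]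
    have expand : ∀ i ∈ range m, (1 / q (i + 1) - 1 / q i) * (y i - y (m + 1)) ^ 2
        = (1 / q (i + 1) - 1 / q i) * (y i - y m) ^ 2
          + (y m - y (m + 1)) * (2 * ((1 / q (i + 1) - 1 / q i) * y i))
          - (y m + y (m + 1)) * (y m - y (m + 1)) * (1 / q (i + 1) - 1 / q i) := by
      intro i _; ring
    rw [Finset.sum_congr rfl expand, Finset.sum_sub_distrib, Finset.sum_add_distrib,
      ← Finset.mul_sum, ← Finset.mul_sum, ← Finset.mul_sum, hw, hsm]
    have hWy : ∑ i ∈ range m, (1 / q (i + 1) - 1 / q i) * y i = y m / q m - s m := by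
      rw [habel]; ring
    rw [hWy]
    have hq1 : q (m + 1) ≠ 0 := hqne (m + 1)
    field_simp
    linear_combination (q (m + 1)) ^ 2 * ih

/-- The increments `Δ_k = Y_k - Y_{k-1}` with the convention `Y_{-1} = 0`. -/
noncomputable def diffSeq {Ω : Type*} (Y : ℕ → Ω → ℝ) : ℕ → Ω → ℝ :=
  fun k ω => Y k ω - if k = 0 then 0 else Y (k - 1) ω

/-- The coupled sum estimator `Z̄ = ∑_{i=0}^N (Y_i - Y_{i-1}) / q_i`. -/
noncomputable def coupledSum {Ω : Type*} (Y : ℕ → Ω → ℝ) (q : ℕ → ℝ)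
    (N : Ω → ℕ) : Ω → ℝ :=
  fun ω => ∑ k ∈ Finset.range (N ω + 1), diffSeq Y k ω / q k

set_option maxHeartbeats 1000000

theorem stmt_6 {Ω : Type*} [MeasurableSpace Ω] (μ : Measure Ω)
    [IsProbabilityMeasure μ]
    (Y : ℕ → Ω → ℝ) (Ylim : Ω → ℝ)
    (hYmeas : ∀ n, Measurable (Y n))
    (hY : ∀ n, MemLp (Y n) 2 μ) (hYlim : MemLp Ylim 2 μ)
    (hconv : Tendsto (fun n => ∫ ω, (Y n ω - Ylim ω) ^ 2 ∂μ) atTop (nhds 0))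
    (q : ℕ → ℝ) (hq0 : q 0 = 1) (hqdec : ∀ i, q (i + 1) ≤ q i)
    (hqpos : ∀ i, 0 < q i) (hqlim : Tendsto q atTop (nhds 0))
    (N : Ω → ℕ) (hNmeas : Measurable N)
    (hindep : IndepFun (fun ω i => Y i ω) N μ)
    (hN : ∀ i, μ {ω | i ≤ N ω} = ENNReal.ofReal (q i)) :
    MemLp (coupledSum Y q N) 2 μ ↔
      Summable (fun i => (1 / q (i + 1) - 1 / q i) * ∫ ω, (Y i ω - Ylim ω) ^ 2 ∂μ) := by
  classical
  have hqne : ∀ i, q i ≠ 0 := fun i => (hqpos i).ne'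
  set w : ℕ → ℝ := fun i => 1 / q (i + 1) - 1 / q i with hwdef
  set r : ℕ → ℝ := fun n => q n - q (n + 1) with hrdef
  set s : ℕ → Ω → ℝ := fun n ω => ∑ k ∈ Finset.range (n + 1), diffSeq Y k ω / q k with hsdef
  have hwnonneg : ∀ i, 0 ≤ w i := by
    intro i
    have := hqdec i
    have h1 := hqpos i
    have h2 := hqpos (i + 1)
    simp only [hwdef]
    rw [sub_nonneg, div_le_div_iff₀ h1 h2]
    nlinarith
  have hrnonneg : ∀ n, 0 ≤ r n := fun n => sub_nonneg.2 (hqdec n)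
  have hdmeas : ∀ k, Measurable (diffSeq Y k) := by
    intro k
    unfold diffSeq
    rcases Nat.eq_zero_or_pos k with hk | hk
    · subst hk
      simpa using hYmeas 0
    · simp only [Nat.pos_iff_ne_zero.1 hk, if_false]
      exact (hYmeas k).sub (hYmeas (k - 1))
  have hsmeas : ∀ n, Measurable (s n) := by
    intro n
    apply Finset.measurable_sum
    intro k _
    exact (hdmeas k).div_const _
  have hdmem : ∀ k, MemLp (diffSeq Y k) 2 μ := by
    intro k
    unfold diffSeq
    rcases Nat.eq_zero_or_pos k with hk | hk
    · subst hk
      simpa using hY 0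
    · simp only [Nat.pos_iff_ne_zero.1 hk, if_false]
      exact (hY k).sub (hY (k - 1))
  have hsmem : ∀ n, MemLp (s n) 2 μ := by
    intro n
    exact memLp_finset_sum _ (fun k _ => by simpa [div_eq_inv_mul] using (hdmem k).const_mul ((q k)⁻¹))
  have hsint : ∀ n, Integrable (fun ω => s n ω ^ 2) μ := fun n => (hsmem n).integrable_sq
  set b : ℕ → ℝ := fun n => ∫ ω, s n ω ^ 2 ∂μ with hbdef
  set a : ℕ → ℝ := fun i => ∫ ω, (Y i ω - Ylim ω) ^ 2 ∂μ with hadef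
  set d : ℕ → ℕ → ℝ := fun i m => ∫ ω, (Y i ω - Y m ω) ^ 2 ∂μ with hddef
  have hbnonneg : ∀ n, 0 ≤ b n := fun n => integral_nonneg fun ω => sq_nonneg _
  have hanonneg : ∀ n, 0 ≤ a n := fun n => integral_nonneg fun ω => sq_nonneg _
  -- the expectation identity
  have hI : ∀ m, ∑ n ∈ range (m + 1), r n * b n + q (m + 1) * b m
      = (∫ ω, Y m ω ^ 2 ∂μ) + ∑ i ∈ range m, w i * d i m := by
    intro m
    have hpt : ∀ ω, (∑ n ∈ range (m + 1), r n * s n ω ^ 2 + q (m + 1) * s m ω ^ 2)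
        = Y m ω ^ 2 + ∑ i ∈ range m, w i * (Y i ω - Y m ω) ^ 2 := fun ω =>
      key_id q (fun k => Y k ω) (fun n => s n ω) hq0 hqne (fun n => rfl) m
    have hL : ∫ ω, (∑ n ∈ range (m + 1), r n * s n ω ^ 2 + q (m + 1) * s m ω ^ 2) ∂μ
        = ∑ n ∈ range (m + 1), r n * b n + q (m + 1) * b m := by
      rw [integral_add (integrable_finset_sum _ (fun n _ => (hsint n).const_mul (r n)))
        ((hsint m).const_mul _)]
      congr 1
      · rw [integral_finset_sum _ (fun n _ => (hsint n).const_mul (r n))]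
        exact Finset.sum_congr rfl fun n _ => integral_const_mul _ _
      · exact integral_const_mul _ _
    have hR : ∫ ω, (Y m ω ^ 2 + ∑ i ∈ range m, w i * (Y i ω - Y m ω) ^ 2) ∂μ
        = (∫ ω, Y m ω ^ 2 ∂μ) + ∑ i ∈ range m, w i * d i m := by
      have hint : ∀ i : ℕ, Integrable (fun ω => (Y i ω - Y m ω) ^ 2) μ := fun i =>
        ((hY i).sub (hY m)).integrable_sq
      rw [integral_add ((hY m).integrable_sq)
        (integrable_finset_sum _ (fun i _ => (hint i).const_mul (w i)))]
      congr 1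
      rw [integral_finset_sum _ (fun i _ => (hint i).const_mul (w i))]
      exact Finset.sum_congr rfl fun i _ => integral_const_mul _ _
    rw [← hL, ← hR]
    exact integral_congr_ae (Filter.Eventually.of_forall hpt)
  -- step C
  have hμN : ∀ n : ℕ, μ {ω | N ω = n} = ENNReal.ofReal (r n) := by
    intro n
    have hset : {ω | N ω = n} = {ω | n ≤ N ω} \ {ω | n + 1 ≤ N ω} := by
      ext ω; simp only [Set.mem_setOf_eq, Set.mem_diff]; omega
    have hsub : {ω | n + 1 ≤ N ω} ⊆ {ω | n ≤ N ω} := fun ω h => le_trans (Nat.le_succ n) h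
    have hmeas1 : MeasurableSet {ω | n + 1 ≤ N ω} := hNmeas measurableSet_Ici
    rw [hset, measure_diff hsub hmeas1.nullMeasurableSet (measure_ne_top μ _), hN n, hN (n + 1),
      ← ENNReal.ofReal_sub _ (hqpos (n + 1)).le]
  have hC : MemLp (coupledSum Y q N) 2 μ ↔ Summable (fun n => r n * b n) := by
    have hZmeas : Measurable (coupledSum Y q N) := by
      have h1 : Measurable (fun p : Ω × ℕ => s p.2 p.1) :=
        measurable_from_prod_countable_left (fun n => hsmeas n)
      exact h1.comp (measurable_id.prodMk hNmeas)
    have hpt : ∀ ω, ENNReal.ofReal (coupledSum Y q N ω ^ 2)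
        = ∑' n, ENNReal.ofReal (s n ω ^ 2)
            * Set.indicator ({n} : Set ℕ) (fun _ => (1 : ℝ≥0∞)) (N ω) := by
      intro ω
      rw [tsum_eq_single (N ω)]
      · simp only [Set.indicator_of_mem (Set.mem_singleton (N ω)), mul_one]
        rfl
      · intro n hn
        rw [Set.indicator_of_notMem (by simpa using (Ne.symm hn)), mul_zero]
    have hfact : ∀ n : ℕ, ∫⁻ ω, ENNReal.ofReal (s n ω ^ 2)
          * Set.indicator ({n} : Set ℕ) (fun _ => (1 : ℝ≥0∞)) (N ω) ∂μ
        = ENNReal.ofReal (r n * b n) := by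
      intro n
      set φ : (ℕ → ℝ) → ℝ≥0∞ := fun v =>
        ENNReal.ofReal ((∑ k ∈ Finset.range (n + 1),
          (v k - if k = 0 then 0 else v (k - 1)) / q k) ^ 2) with hφdef
      have hev : ∀ j : ℕ, Measurable fun v : ℕ → ℝ => v j := fun j => measurable_pi_apply j
      have hφmeas : Measurable φ := by
        apply ENNReal.measurable_ofReal.comp
        apply Measurable.pow _ measurable_const
        apply Finset.measurable_sum
        intro k _
        rcases Nat.eq_zero_or_pos k with hk | hk
        · subst hk; simpa using (hev 0).div_const (q 0)
        · simp only [Nat.pos_iff_ne_zero.1 hk, if_false]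
          exact ((hev k).sub (hev (k - 1))).div_const _
      set ψ : ℕ → ℝ≥0∞ := fun j => Set.indicator ({n} : Set ℕ) (fun _ => (1 : ℝ≥0∞)) j
      have hψmeas : Measurable ψ := measurable_from_top
      have hcomp : IndepFun (φ ∘ (fun ω i => Y i ω)) (ψ ∘ N) μ :=
        hindep.comp hφmeas hψmeas
      have hmf : Measurable (φ ∘ (fun ω i => Y i ω)) :=
        hφmeas.comp (measurable_pi_lambda _ (fun i => hYmeas i))
      have hmg : Measurable (ψ ∘ N) := hψmeas.comp hNmeas
      have heq : (fun ω => ENNReal.ofReal (s n ω ^ 2)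
          * Set.indicator ({n} : Set ℕ) (fun _ => (1 : ℝ≥0∞)) (N ω))
          = (φ ∘ (fun ω i => Y i ω)) * (ψ ∘ N) := rfl
      rw [heq, lintegral_mul_eq_lintegral_mul_lintegral_of_indepFun hmf hmg hcomp]
      have h1 : ∫⁻ ω, (φ ∘ (fun ω i => Y i ω)) ω ∂μ = ENNReal.ofReal (b n) := by
        have : (φ ∘ (fun ω i => Y i ω)) = fun ω => ENNReal.ofReal (s n ω ^ 2) := rfl
        rw [this, ← ofReal_integral_eq_lintegral_ofReal (hsint n)
          (Filter.Eventually.of_forall fun ω => sq_nonneg _)]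
      have h2 : ∫⁻ ω, (ψ ∘ N) ω ∂μ = ENNReal.ofReal (r n) := by
        have hind : (ψ ∘ N) = Set.indicator {ω | N ω = n} (fun _ => (1 : ℝ≥0∞)) := by
          funext ω
          by_cases h : N ω = n
          · simp [ψ, h, Set.indicator_of_mem, Set.mem_setOf_eq]
          · simp [ψ, h, Set.indicator_of_notMem, Set.mem_setOf_eq]
        have hmset : MeasurableSet {ω | N ω = n} := hNmeas (measurableSet_singleton n)
        rw [hind, lintegral_indicator_const hmset, one_mul, hμN n]
      rw [h1, h2, ← ENNReal.ofReal_mul (hbnonneg n)]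
      rw [mul_comm (b n) (r n)]
    have hlint : ∫⁻ ω, ENNReal.ofReal (coupledSum Y q N ω ^ 2) ∂μ
        = ∑' n, ENNReal.ofReal (r n * b n) := by
      rw [lintegral_congr hpt, lintegral_tsum (fun n => by
        apply AEMeasurable.mul
        · exact (ENNReal.measurable_ofReal.comp ((hsmeas n).pow measurable_const)).aemeasurable
        · exact ((measurable_from_top (f := fun j : ℕ => Set.indicator ({n} : Set ℕ)
            (fun _ => (1 : ℝ≥0∞)) j)).comp hNmeas).aemeasurable)]
      exact tsum_congr hfact
    have hmem_iff : MemLp (coupledSum Y q N) 2 μ ↔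
        ∫⁻ ω, ENNReal.ofReal (coupledSum Y q N ω ^ 2) ∂μ < ⊤ := by
      rw [memLp_two_iff_integrable_sq hZmeas.aestronglyMeasurable]
      constructor
      · intro h
        have := h.hasFiniteIntegral
        rwa [hasFiniteIntegral_iff_ofReal
          (Filter.Eventually.of_forall fun ω => sq_nonneg _)] at this
      · intro h
        refine ⟨(hZmeas.pow measurable_const).aestronglyMeasurable, ?_⟩
        rwa [hasFiniteIntegral_iff_ofReal
          (Filter.Eventually.of_forall fun ω => sq_nonneg _)]
    rw [hmem_iff, hlint]
    have hnn : ∀ n, 0 ≤ r n * b n := fun n => mul_nonneg (hrnonneg n) (hbnonneg n)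
    constructor
    · intro h
      have hsum := ENNReal.summable_toReal h.ne
      convert hsum using 1
      funext n
      rw [ENNReal.toReal_ofReal (hnn n)]
    · intro h
      rw [← ENNReal.ofReal_tsum_of_nonneg hnn h]
      exact ENNReal.ofReal_lt_top
  -- L² norm infrastructure
  have hnormsq : ∀ (f : Ω → ℝ) (hf : MemLp f 2 μ), ‖hf.toLp f‖ ^ 2 = ∫ ω, f ω ^ 2 ∂μ := by
    intro f hf
    rw [← real_inner_self_eq_norm_sq, MeasureTheory.L2.inner_def]
    apply integral_congr_ae
    filter_upwards [hf.coeFn_toLp] with ω hω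
    rw [hω]
    simp [RCLike.inner_apply, conj_trivial, sq]
  set g : ℕ → Lp ℝ 2 μ := fun n => ((hY n).sub hYlim).toLp (fun ω => Y n ω - Ylim ω)
    with hgdef
  have hga : ∀ n, ‖g n‖ ^ 2 = a n := fun n => hnormsq _ _
  have hgd : ∀ i m : ℕ, ‖g i - g m‖ ^ 2 = d i m := by
    intro i m
    have h1 : g i - g m = (((hY i).sub hYlim).sub ((hY m).sub hYlim)).toLp
        ((fun ω => Y i ω - Ylim ω) - (fun ω => Y m ω - Ylim ω)) :=
      (MemLp.toLp_sub _ _).symm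
    have h2 : (((hY i).sub hYlim).sub ((hY m).sub hYlim)).toLp
        ((fun ω => Y i ω - Ylim ω) - (fun ω => Y m ω - Ylim ω))
        = ((hY i).sub (hY m)).toLp (fun ω => Y i ω - Y m ω) := by
      apply MemLp.toLp_congr
      apply Filter.Eventually.of_forall
      intro ω
      show (Y i ω - Ylim ω) - (Y m ω - Ylim ω) = Y i ω - Y m ω
      ring
    rw [h1, h2]
    exact hnormsq _ _
  have hgnorm0 : Tendsto (fun m => ‖g m‖) atTop (nhds 0) := by
    have heq : (fun m => ‖g m‖) = fun m => Real.sqrt (a m) := by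
      funext m
      rw [← hga m, Real.sqrt_sq (norm_nonneg _)]
    rw [heq]
    have h2 := (Real.continuous_sqrt.tendsto 0).comp hconv
    simpa [Function.comp_def] using h2
  have hgtend : Tendsto g atTop (nhds 0) := by
    rw [tendsto_zero_iff_norm_tendsto_zero]
    exact hgnorm0
  have hd_lim : ∀ i, Tendsto (fun m => d i m) atTop (nhds (a i)) := by
    intro i
    have h1 : Tendsto (fun m => g i - g m) atTop (nhds (g i)) := by
      have h0 := Filter.Tendsto.const_sub (g i) hgtend
      rwa [sub_zero] at h0
    have h2 : Tendsto (fun m => ‖g i - g m‖ ^ 2) atTop (nhds (‖g i‖ ^ 2)) :=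
      (((continuous_norm.tendsto _).comp h1).pow 2)
    have h3 : (fun m => ‖g i - g m‖ ^ 2) = fun m => d i m := funext fun m => hgd i m
    rw [h3, hga i] at h2
    exact h2
  have hdnonneg : ∀ i m, 0 ≤ d i m := fun i m => integral_nonneg fun ω => sq_nonneg _
  have hd2 : ∀ i m, d i m ≤ 2 * a i + 2 * a m := by
    intro i m
    rw [← hgd, ← hga, ← hga]
    have h := norm_sub_le (g i) (g m)
    have h2 : ‖g i - g m‖ ^ 2 ≤ (‖g i‖ + ‖g m‖) ^ 2 :=
      pow_le_pow_left₀ (norm_nonneg _) h 2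
    nlinarith [h2, sq_nonneg (‖g i‖ - ‖g m‖)]
  have hY2nonneg : ∀ m, (0:ℝ) ≤ ∫ ω, Y m ω ^ 2 ∂μ := fun m =>
    integral_nonneg fun ω => sq_nonneg _
  have hY2bdd : ∃ C : ℝ, ∀ m, ∫ ω, Y m ω ^ 2 ∂μ ≤ C := by
    obtain ⟨B, hB⟩ := hgnorm0.bddAbove_range
    refine ⟨(B + ‖hYlim.toLp Ylim‖) ^ 2, fun m => ?_⟩
    have hsub : (hY m).toLp (Y m) - hYlim.toLp Ylim = g m := by
      rw [hgdef]
      exact (MemLp.toLp_sub _ _).symm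
    have h1 : ‖(hY m).toLp (Y m)‖ ≤ B + ‖hYlim.toLp Ylim‖ := by
      have h2 : ‖(hY m).toLp (Y m)‖ ≤ ‖(hY m).toLp (Y m) - hYlim.toLp Ylim‖
          + ‖hYlim.toLp Ylim‖ := by
        have := norm_add_le ((hY m).toLp (Y m) - hYlim.toLp Ylim) (hYlim.toLp Ylim)
        simpa using this
      have h3 : ‖(hY m).toLp (Y m) - hYlim.toLp Ylim‖ ≤ B := by
        rw [hsub]
        exact hB (Set.mem_range_self m)
      linarith
    rw [← hnormsq _ (hY m)]
    have hnn : (0:ℝ) ≤ ‖(hY m).toLp (Y m)‖ := norm_nonneg _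
    nlinarith [norm_nonneg (hYlim.toLp Ylim), hB (Set.mem_range_self 0)]
  -- divergence of ∑ (q m / q (m+1) - 1)
  have hgnn : ∀ m : ℕ, (0:ℝ) ≤ q m / q (m + 1) - 1 := by
    intro m
    have h1 : (1:ℝ) ≤ q m / q (m + 1) := (one_le_div (hqpos (m + 1))).2 (hqdec m)
    linarith
  have hgdiv : ¬ Summable (fun m => q m / q (m + 1) - 1) := by
    intro hsum
    have hge : ∀ m : ℕ, Real.log (q m) - Real.log (q (m + 1)) ≤ q m / q (m + 1) - 1 := by
      intro m
      have h1 := Real.log_le_sub_one_of_pos (div_pos (hqpos m) (hqpos (m + 1)))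
      rwa [Real.log_div (hqne m) (hqne (m + 1))] at h1
    have hbound : ∀ M : ℕ, - Real.log (q M) ≤ ∑' m, (q m / q (m + 1) - 1) := by
      intro M
      have h1 : ∑ m ∈ Finset.range M, (Real.log (q m) - Real.log (q (m + 1)))
          = Real.log (q 0) - Real.log (q M) := Finset.sum_range_sub' _ M
      have h2 : ∑ m ∈ Finset.range M, (Real.log (q m) - Real.log (q (m + 1)))
          ≤ ∑ m ∈ Finset.range M, (q m / q (m + 1) - 1) :=
        Finset.sum_le_sum fun m _ => hge m
      have h3 : ∑ m ∈ Finset.range M, (q m / q (m + 1) - 1)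
          ≤ ∑' m, (q m / q (m + 1) - 1) := Summable.sum_le_tsum _ (fun i _ => hgnn i) hsum
      rw [h1, hq0, Real.log_one] at h2
      linarith
    have hlog : Tendsto (fun M => - Real.log (q M)) atTop atTop := by
      have h0 : Tendsto q atTop (nhdsWithin 0 (Set.Ioi 0)) :=
        tendsto_nhdsWithin_of_tendsto_nhds_of_eventually_within _ hqlim
          (Filter.Eventually.of_forall fun m => hqpos m)
      have h1 : Tendsto (fun M => Real.log (q M)) atTop atBot :=
        Real.tendsto_log_nhdsGT_zero.comp h0
      exact tendsto_neg_atBot_atTop.comp h1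
    obtain ⟨M, hM⟩ := (hlog.eventually_gt_atTop (∑' m, (q m / q (m + 1) - 1))).exists
    exact absurd (hbound M) (not_le.2 hM)
  have hwq : ∀ k : ℕ, w k * q k = q k / q (k + 1) - 1 := by
    intro k
    have h1 := hqne k
    have h2 := hqne (k + 1)
    simp only [hwdef]
    field_simp
  -- step D
  have hD : Summable (fun n => r n * b n) ↔ Summable (fun i => w i * a i) := by
    constructor
    · -- from E[Z²] < ∞ to ∑ w a < ∞
      intro hB
      set K := ∑' n, r n * b n with hKdef
      have hKpart : ∀ m, ∑ n ∈ Finset.range (m + 1), r n * b n ≤ K :=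
        fun m => Summable.sum_le_tsum _ (fun i _ => mul_nonneg (hrnonneg i) (hbnonneg i)) hB
      have hgood : ∀ M0 : ℕ, ∃ m, M0 ≤ m ∧ q (m + 1) * b m ≤ 1 := by
        by_contra hcon
        push_neg at hcon
        obtain ⟨M0, hM0⟩ := hcon
        apply hgdiv
        refine (summable_nat_add_iff M0).1
          (Summable.of_nonneg_of_le (fun m => hgnn _) (fun m => ?_)
            ((summable_nat_add_iff M0).2 hB))
        have h1 : 1 < q (m + M0 + 1) * b (m + M0) := (hM0 (m + M0) (Nat.le_add_left _ _))
        have h2 : 1 / q (m + M0 + 1) ≤ b (m + M0) := by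
          rw [div_le_iff₀ (hqpos _)]
          nlinarith [hqpos (m + M0 + 1)]
        have h3 : q (m + M0) / q (m + M0 + 1) - 1 = r (m + M0) * (1 / q (m + M0 + 1)) := by
          have := hqne (m + M0 + 1)
          simp only [hrdef]
          field_simp
        rw [h3]
        exact mul_le_mul_of_nonneg_left h2 (hrnonneg _)
      apply summable_of_sum_range_le
        (fun i => mul_nonneg (hwnonneg i) (hanonneg i)) (c := K + 1)
      intro M
      by_contra hcon
      push_neg at hcon
      have hev : ∀ᶠ m in atTop, K + 1 < ∑ i ∈ Finset.range M, w i * d i m :=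
        (tendsto_finset_sum _ (fun i _ => (hd_lim i).const_mul (w i))).eventually_const_lt hcon
      obtain ⟨M1, hM1⟩ := Filter.eventually_atTop.1 hev
      obtain ⟨m, hm_ge, hmgood⟩ := hgood (max M M1)
      have h1 : K + 1 < ∑ i ∈ Finset.range M, w i * d i m :=
        hM1 m (le_trans (le_max_right _ _) hm_ge)
      have h2 : ∑ i ∈ Finset.range M, w i * d i m ≤ ∑ i ∈ Finset.range m, w i * d i m :=
        Finset.sum_le_sum_of_subset_of_nonneg
          (Finset.range_subset_range.2 (le_trans (le_max_left _ _) hm_ge))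
          (fun i _ _ => mul_nonneg (hwnonneg i) (hdnonneg i m))
      have hIm := hI m
      have h4 := hY2nonneg m
      have h5 := hKpart m
      linarith
    · -- from ∑ w a < ∞ to E[Z²] < ∞
      intro hA
      set A := ∑' i, w i * a i with hAdef
      have hsmall : ∀ M0 : ℕ, ∃ m, M0 ≤ m ∧ a m ≤ q m := by
        by_contra hcon
        push_neg at hcon
        obtain ⟨M0, hM0⟩ := hcon
        apply hgdiv
        refine (summable_nat_add_iff M0).1
          (Summable.of_nonneg_of_le (fun m => hgnn _) (fun m => ?_)
            ((summable_nat_add_iff M0).2 hA))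
        have hqa : q (m + M0) ≤ a (m + M0) := (hM0 (m + M0) (Nat.le_add_left _ _)).le
        rw [← hwq (m + M0)]
        exact mul_le_mul_of_nonneg_left hqa (hwnonneg _)
      obtain ⟨C, hC1⟩ := hY2bdd
      apply summable_of_sum_range_le
        (fun n => mul_nonneg (hrnonneg n) (hbnonneg n)) (c := C + (2 * A + 2))
      intro M
      obtain ⟨m, hmM, hma⟩ := hsmall M
      have hsub : ∑ n ∈ Finset.range M, r n * b n ≤ ∑ n ∈ Finset.range (m + 1), r n * b n :=
        Finset.sum_le_sum_of_subset_of_nonneg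
          (Finset.range_subset_range.2 (by omega))
          (fun i _ _ => mul_nonneg (hrnonneg i) (hbnonneg i))
      have hqb : 0 ≤ q (m + 1) * b m := mul_nonneg (hqpos _).le (hbnonneg m)
      have hIm := hI m
      have hdsum : ∑ i ∈ Finset.range m, w i * d i m ≤ 2 * A + 2 := by
        have hstep : ∀ i ∈ Finset.range m,
            w i * d i m ≤ 2 * (w i * a i) + 2 * w i * a m := by
          intro i _
          have h1 := hd2 i m
          nlinarith [hwnonneg i]
        have hcalc1 : ∑ i ∈ Finset.range m, w i * d i m
            ≤ ∑ i ∈ Finset.range m, (2 * (w i * a i) + 2 * w i * a m) :=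
          Finset.sum_le_sum hstep
        have hcalc2 : ∑ i ∈ Finset.range m, (2 * (w i * a i) + 2 * w i * a m)
            = 2 * (∑ i ∈ Finset.range m, w i * a i)
              + 2 * (∑ i ∈ Finset.range m, w i) * a m := by
          rw [Finset.sum_add_distrib, ← Finset.mul_sum]
          congr 1
          rw [← Finset.sum_mul, ← Finset.mul_sum]
        have hp1 : ∑ i ∈ Finset.range m, w i * a i ≤ A :=
          Summable.sum_le_tsum _ (fun i _ => mul_nonneg (hwnonneg i) (hanonneg i)) hA
        have hp2 : (∑ i ∈ Finset.range m, w i) = 1 / q m - 1 := sum_tele_w q hq0 m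
        have hp3 : (1 / q m - 1) * a m ≤ 1 := by
          have h4 : (1 / q m) * a m ≤ 1 := by
            rw [div_mul_eq_mul_div, one_mul, div_le_one (hqpos m)]
            exact hma
          have h5 : (1 / q m - 1) * a m = (1 / q m) * a m - a m := by ring
          linarith [hanonneg m]
        rw [hp2] at hcalc2
        linarith
      have h6 := hC1 m
      linarith
  exact hC.trans hD
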